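/- (Bounding the strength of the regression) Let (X₁, Y₁), …, (X_n, Y_n) be random vectors in ℝ^p × ℝ with finite second moments, set Σ_n := (1/n) Σ_{i=1}^n E[X_i X_iᵀ] and Γ_n := (1/n) Σ_{i=1}^n E[X_i Y_i], and suppose Λ(k; Σ_n) > 0. Then S_{2,k}(Σ_n, Γ_n) ≤ ( (1/(n Λ(k; Σ_n))) Σ_{i=1}^n E[Y_i²] )^{1/2} and S_{1,k}(Σ_n, Γ_n) ≤ ( (k/(n Λ(k; Σ_n))) Σ_{i=1}^n E[Y_i²] )^{1/2}. -/

import Mathlib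

open scoped BigOperators
open MeasureTheory ProbabilityTheory Real Matrix

noncomputable section

/-- The Euclidean (`ℓ₂`) norm of a finitely indexed real vector. -/
def norm2 {ι : Type*} [Fintype ι] (v : ι → ℝ) : ℝ := Real.sqrt (∑ i, (v i) ^ 2)

/-- The `ℓ₁` norm of a finitely indexed real vector. -/
def norm1 {ι : Type*} [Fintype ι] (v : ι → ℝ) : ℝ := ∑ i, |v i|

/-- The `ℓ₂ → ℓ₂` operator norm of a square real matrix. -/
def opNorm {ι : Type*} [Fintype ι] (A : Matrix ι ι ℝ) : ℝ :=
  sSup {r | ∃ x : ι → ℝ, norm2 x ≤ 1 ∧ r = norm2 (A.mulVec x)}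

/-- The collection of models: nonempty subsets of `{1, …, p}` of cardinality at most `k`. -/
def Models (p k : ℕ) : Set (Finset (Fin p)) := {M | 1 ≤ M.card ∧ M.card ≤ k}

/-- The subvector of `v` with indices in the model `M`. -/
def subv {p : ℕ} (v : Fin p → ℝ) (M : Finset (Fin p)) : {x // x ∈ M} → ℝ := fun i => v i.1

/-- The submatrix of `A` with row and column indices in the model `M`. -/
def subm {p : ℕ} (A : Matrix (Fin p) (Fin p) ℝ) (M : Finset (Fin p)) :
    Matrix {x // x ∈ M} {x // x ∈ M} ℝ := fun i j => A i.1 j.1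

/-- `RIP(k, A)`: the maximal `k`-sparse operator norm `sup_{M ∈ 𝓜(k)} ‖A(M)‖_op`. -/
def RIP {p : ℕ} (k : ℕ) (A : Matrix (Fin p) (Fin p) ℝ) : ℝ :=
  ⨆ M : Models p k, opNorm (subm A M.1)

/-- `𝒟(k, v) = sup_{M ∈ 𝓜(k)} ‖v(M)‖₂`. -/
def Dnorm {p : ℕ} (k : ℕ) (v : Fin p → ℝ) : ℝ :=
  ⨆ M : Models p k, norm2 (subv v M.1)

/-- `θ` has at most `k` nonzero coordinates. -/
def sparse {p : ℕ} (k : ℕ) (θ : Fin p → ℝ) : Prop := Set.ncard {j | θ j ≠ 0} ≤ k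

/-- The minimal `k`-sparse eigenvalue
`Λ(k; A) = inf{θᵀAθ/‖θ‖₂² : θ ≠ 0, θ k-sparse}`. -/
def Lam {p : ℕ} (k : ℕ) (A : Matrix (Fin p) (Fin p) ℝ) : ℝ :=
  sInf {r | ∃ θ : Fin p → ℝ, θ ≠ 0 ∧ sparse k θ ∧ r = θ ⬝ᵥ A.mulVec θ / norm2 θ ^ 2}

/-- The linear regression map `β_M(Σ, Γ) = (Σ(M))⁻¹ Γ(M)`. -/
def betaM {p : ℕ} (M : Finset (Fin p)) (S : Matrix (Fin p) (Fin p) ℝ) (G : Fin p → ℝ) :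
    {x // x ∈ M} → ℝ := (subm S M)⁻¹.mulVec (subv G M)

/-- `S_{2,k}(Σ, Γ) = sup_{M ∈ 𝓜(k)} ‖β_M(Σ, Γ)‖₂`. -/
def S2k {p : ℕ} (k : ℕ) (S : Matrix (Fin p) (Fin p) ℝ) (G : Fin p → ℝ) : ℝ :=
  ⨆ M : Models p k, norm2 (betaM M.1 S G)

/-- `S_{1,k}(Σ, Γ) = sup_{M ∈ 𝓜(k)} ‖β_M(Σ, Γ)‖₁`. -/
def S1k {p : ℕ} (k : ℕ) (S : Matrix (Fin p) (Fin p) ℝ) (G : Fin p → ℝ) : ℝ :=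
  ⨆ M : Models p k, norm1 (betaM M.1 S G)

/-- The `k`-sparse Euclidean unit ball `Θ_k ⊆ ℝ^p`. -/
def Theta (p k : ℕ) : Set (Fin p → ℝ) := {θ | sparse k θ ∧ norm2 θ ≤ 1}

/-- The elementwise maximum norm `|||A|||_∞` of a matrix. -/
def normInfMat {p : ℕ} (A : Matrix (Fin p) (Fin p) ℝ) : ℝ :=
  ⨆ q : Fin p × Fin p, |A q.1 q.2|

/-- The supremum norm `‖v‖_∞` of a vector. -/
def normInfVec {p : ℕ} (v : Fin p → ℝ) : ℝ := ⨆ j, |v j|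

/-! ### Auxiliary lemmas -/

/-- Extension of a vector on a model by zero. -/
def extv {p : ℕ} (M : Finset (Fin p)) (x : {j // j ∈ M} → ℝ) : Fin p → ℝ :=
  fun j => if h : j ∈ M then x ⟨j, h⟩ else 0

lemma extv_sum {p : ℕ} (M : Finset (Fin p)) (h : Fin p → ℝ) (h0 : ∀ j ∉ M, h j = 0) :
    ∑ j, h j = ∑ j : {x // x ∈ M}, h j.1 := by
  rw [Finset.sum_coe_sort M (fun j => h j)]
  exact (Finset.sum_subset M.subset_univ (fun j _ hj => h0 j hj)).symm

lemma extv_mem {p : ℕ} (M : Finset (Fin p)) (x : {j // j ∈ M} → ℝ) (j : {j // j ∈ M}) :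
    extv M x j.1 = x j := by
  simp [extv, j.2]

lemma extv_not_mem {p : ℕ} (M : Finset (Fin p)) (x : {j // j ∈ M} → ℝ) {j : Fin p}
    (hj : j ∉ M) : extv M x j = 0 := by
  simp [extv, hj]

lemma extv_ne_zero {p : ℕ} (M : Finset (Fin p)) (x : {j // j ∈ M} → ℝ) (hx : x ≠ 0) :
    extv M x ≠ 0 := by
  obtain ⟨i, hi⟩ := Function.ne_iff.1 hx
  intro h
  apply hi
  have := congrFun h i.1
  rwa [extv_mem] at this

lemma extv_sparse {p : ℕ} (k : ℕ) (M : Finset (Fin p)) (x : {j // j ∈ M} → ℝ)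
    (hM : M.card ≤ k) : sparse k (extv M x) := by
  refine le_trans (le_trans (Set.ncard_le_ncard ?_ M.finite_toSet) ?_) hM
  · intro j hj
    by_contra hjM
    exact hj (extv_not_mem M x hjM)
  · rw [Set.ncard_coe_finset]

lemma extv_norm2 {p : ℕ} (M : Finset (Fin p)) (x : {j // j ∈ M} → ℝ) :
    norm2 (extv M x) = norm2 x := by
  unfold norm2
  congr 1
  rw [extv_sum M _ (fun j hj => by rw [extv_not_mem M x hj]; ring)]
  exact Finset.sum_congr rfl fun j _ => by rw [extv_mem]

lemma extv_dot_mulVec {p : ℕ} (M : Finset (Fin p)) (A : Matrix (Fin p) (Fin p) ℝ)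
    (x : {j // j ∈ M} → ℝ) :
    (extv M x) ⬝ᵥ A.mulVec (extv M x) = x ⬝ᵥ (subm A M).mulVec x := by
  simp only [dotProduct, Matrix.mulVec]
  rw [extv_sum M _ (fun j hj => by rw [extv_not_mem M x hj]; ring)]
  refine Finset.sum_congr rfl fun j _ => ?_
  rw [extv_mem]
  congr 1
  rw [extv_sum M _ (fun l hl => by rw [extv_not_mem M x hl]; ring)]
  exact Finset.sum_congr rfl fun l _ => by rw [extv_mem]; rfl

lemma extv_dot_vec {p : ℕ} (M : Finset (Fin p)) (G : Fin p → ℝ) (x : {j // j ∈ M} → ℝ) :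
    (extv M x) ⬝ᵥ G = x ⬝ᵥ subv G M := by
  simp only [dotProduct]
  rw [extv_sum M _ (fun j hj => by rw [extv_not_mem M x hj]; ring)]
  exact Finset.sum_congr rfl fun j _ => by rw [extv_mem]; rfl

lemma triple_swap {α β γ : Type*} [Fintype α] [Fintype β] [Fintype γ] (f : α → β → γ → ℝ) :
    ∑ a, ∑ b, ∑ c, f a b c = ∑ c, ∑ a, ∑ b, f a b c := by
  have h1 : ∀ a : α, ∑ b, ∑ c, f a b c = ∑ c, ∑ b, f a b c := fun a => Finset.sum_comm
  calc ∑ a, ∑ b, ∑ c, f a b c = ∑ a, ∑ c, ∑ b, f a b c :=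
        Finset.sum_congr rfl fun a _ => h1 a
    _ = ∑ c, ∑ a, ∑ b, f a b c := Finset.sum_comm

lemma norm2_nonneg {ι : Type*} [Fintype ι] (v : ι → ℝ) : 0 ≤ norm2 v := Real.sqrt_nonneg _

lemma norm2_sq {ι : Type*} [Fintype ι] (v : ι → ℝ) : (norm2 v) ^ 2 = ∑ i, (v i) ^ 2 :=
  Real.sq_sqrt (Finset.sum_nonneg fun i _ => sq_nonneg _)

lemma norm2_pos {ι : Type*} [Fintype ι] {v : ι → ℝ} (hv : v ≠ 0) : 0 < norm2 v := by
  obtain ⟨i, hi⟩ := Function.ne_iff.1 hv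
  refine Real.sqrt_pos.2 (Finset.sum_pos' (fun j _ => sq_nonneg _) ⟨i, Finset.mem_univ i, ?_⟩)
  exact lt_of_le_of_ne (sq_nonneg _) (Ne.symm (pow_ne_zero 2 hi))

/-- Bounding the strength of the regression: with
`Σ_n = (1/n)∑ᵢ 𝔼[XᵢXᵢᵀ]`, `Γ_n = (1/n)∑ᵢ 𝔼[XᵢYᵢ]` and `Λ(k; Σ_n) > 0`, one has
`S_{2,k}(Σ_n, Γ_n) ≤ ((1/(nΛ(k;Σ_n))) ∑ᵢ 𝔼[Yᵢ²])^{1/2}` and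
`S_{1,k}(Σ_n, Γ_n) ≤ ((k/(nΛ(k;Σ_n))) ∑ᵢ 𝔼[Yᵢ²])^{1/2}`. -/
theorem stmt4 {Ω : Type} [MeasurableSpace Ω] (μ : Measure Ω) (hμ : IsProbabilityMeasure μ)
    {n p : ℕ} (hn : 0 < n) (k : ℕ) (hk : 1 ≤ k)
    (X : Fin n → Ω → (Fin p → ℝ)) (Y : Fin n → Ω → ℝ)
    (hXmeas : ∀ i, Measurable (X i)) (hYmeas : ∀ i, Measurable (Y i))
    (hXX : ∀ i j l, Integrable (fun ω => X i ω j * X i ω l) μ)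
    (hXY : ∀ i j, Integrable (fun ω => X i ω j * Y i ω) μ)
    (hYY : ∀ i, Integrable (fun ω => (Y i ω) ^ 2) μ)
    (Sn : Matrix (Fin p) (Fin p) ℝ)
    (hSn : Sn = Matrix.of fun j l => (n : ℝ)⁻¹ * ∑ i, ∫ ω, X i ω j * X i ω l ∂μ)
    (Gn : Fin p → ℝ)
    (hGn : Gn = fun j => (n : ℝ)⁻¹ * ∑ i, ∫ ω, X i ω j * Y i ω ∂μ)
    (hLam : 0 < Lam k Sn) :
    S2k k Sn Gn ≤
        Real.sqrt (((n : ℝ) * Lam k Sn)⁻¹ * ∑ i, ∫ ω, (Y i ω) ^ 2 ∂μ) ∧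
      S1k k Sn Gn ≤
        Real.sqrt ((k : ℝ) * ((n : ℝ) * Lam k Sn)⁻¹ * ∑ i, ∫ ω, (Y i ω) ^ 2 ∂μ) := by
  classical
  have hn' : (0:ℝ) < (n:ℝ) := Nat.cast_pos.2 hn
  have hninv : (0:ℝ) < (n:ℝ)⁻¹ := by positivity
  set V := ∑ i, ∫ ω, (Y i ω) ^ 2 ∂μ with hVdef
  have hV0 : 0 ≤ V := Finset.sum_nonneg fun i _ => integral_nonneg fun ω => sq_nonneg _
  -- integrability of the quadratic and cross terms
  have hintZ2 : ∀ (i : Fin n) (θ : Fin p → ℝ),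
      Integrable (fun ω => (∑ j, θ j * X i ω j) ^ 2) μ := by
    intro i θ
    have h1 : (fun ω => (∑ j, θ j * X i ω j) ^ 2)
        = fun ω => ∑ j, ∑ l, θ j * θ l * (X i ω j * X i ω l) := by
      funext ω
      rw [sq, Finset.sum_mul_sum]
      exact Finset.sum_congr rfl fun j _ => Finset.sum_congr rfl fun l _ => by ring
    rw [h1]
    exact integrable_finset_sum _ fun j _ =>
      integrable_finset_sum _ fun l _ => (hXX i j l).const_mul _
  have hintZY : ∀ (i : Fin n) (θ : Fin p → ℝ),
      Integrable (fun ω => (∑ j, θ j * X i ω j) * Y i ω) μ := by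
    intro i θ
    have h1 : (fun ω => (∑ j, θ j * X i ω j) * Y i ω)
        = fun ω => ∑ j, θ j * (X i ω j * Y i ω) := by
      funext ω
      rw [Finset.sum_mul]
      exact Finset.sum_congr rfl fun j _ => by ring
    rw [h1]
    exact integrable_finset_sum _ fun j _ => (hXY i j).const_mul _
  -- expansion of the integrals
  have hZ2 : ∀ (i : Fin n) (θ : Fin p → ℝ),
      ∫ ω, (∑ j, θ j * X i ω j) ^ 2 ∂μ
        = ∑ j, ∑ l, θ j * θ l * ∫ ω, X i ω j * X i ω l ∂μ := by
    intro i θ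
    have h1 : ∀ ω, (∑ j, θ j * X i ω j) ^ 2
        = ∑ j, ∑ l, θ j * θ l * (X i ω j * X i ω l) := by
      intro ω
      rw [sq, Finset.sum_mul_sum]
      exact Finset.sum_congr rfl fun j _ => Finset.sum_congr rfl fun l _ => by ring
    simp_rw [h1]
    rw [integral_finset_sum _ fun j _ =>
      integrable_finset_sum _ fun l _ => (hXX i j l).const_mul _]
    refine Finset.sum_congr rfl fun j _ => ?_
    rw [integral_finset_sum _ fun l _ => (hXX i j l).const_mul _]
    exact Finset.sum_congr rfl fun l _ => integral_const_mul _ _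
  have hZY : ∀ (i : Fin n) (θ : Fin p → ℝ),
      ∫ ω, (∑ j, θ j * X i ω j) * Y i ω ∂μ
        = ∑ j, θ j * ∫ ω, X i ω j * Y i ω ∂μ := by
    intro i θ
    have h1 : ∀ ω, (∑ j, θ j * X i ω j) * Y i ω = ∑ j, θ j * (X i ω j * Y i ω) := by
      intro ω; rw [Finset.sum_mul]; exact Finset.sum_congr rfl fun j _ => by ring
    simp_rw [h1]
    rw [integral_finset_sum _ fun j _ => (hXY i j).const_mul _]
    exact Finset.sum_congr rfl fun j _ => integral_const_mul _ _
  -- the quadratic form of Sn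
  have hquad : ∀ θ : Fin p → ℝ,
      θ ⬝ᵥ Sn.mulVec θ = (n:ℝ)⁻¹ * ∑ i, ∫ ω, (∑ j, θ j * X i ω j) ^ 2 ∂μ := by
    intro θ
    have hr : (n:ℝ)⁻¹ * ∑ i, ∫ ω, (∑ j, θ j * X i ω j) ^ 2 ∂μ
        = ∑ j, ∑ l, ∑ i, (n:ℝ)⁻¹ * (θ j * θ l * ∫ ω, X i ω j * X i ω l ∂μ) := by
      rw [triple_swap (fun j l i => (n:ℝ)⁻¹ * (θ j * θ l * ∫ ω, X i ω j * X i ω l ∂μ))]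
      rw [Finset.mul_sum]
      refine Finset.sum_congr rfl fun i _ => ?_
      rw [hZ2 i θ, Finset.mul_sum]
      exact Finset.sum_congr rfl fun j _ => by rw [Finset.mul_sum]
    rw [hr, hSn]
    simp only [dotProduct, Matrix.mulVec, Matrix.of_apply]
    refine Finset.sum_congr rfl fun j _ => ?_
    rw [Finset.mul_sum]
    refine Finset.sum_congr rfl fun l _ => ?_
    calc θ j * (((n:ℝ)⁻¹ * ∑ i, ∫ ω, X i ω j * X i ω l ∂μ) * θ l)
        = ((n:ℝ)⁻¹ * (θ j * θ l)) * ∑ i, ∫ ω, X i ω j * X i ω l ∂μ := by ring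
      _ = ∑ i, (n:ℝ)⁻¹ * (θ j * θ l * ∫ ω, X i ω j * X i ω l ∂μ) := by
          rw [Finset.mul_sum]
          exact Finset.sum_congr rfl fun i _ => by ring
  -- the linear form of Gn
  have hGdot : ∀ θ : Fin p → ℝ,
      θ ⬝ᵥ Gn = (n:ℝ)⁻¹ * ∑ i, ∫ ω, (∑ j, θ j * X i ω j) * Y i ω ∂μ := by
    intro θ
    have hr : (n:ℝ)⁻¹ * ∑ i, ∫ ω, (∑ j, θ j * X i ω j) * Y i ω ∂μ
        = ∑ j, ∑ i, (n:ℝ)⁻¹ * (θ j * ∫ ω, X i ω j * Y i ω ∂μ) := by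
      rw [← Finset.sum_comm, Finset.mul_sum]
      refine Finset.sum_congr rfl fun i _ => ?_
      rw [hZY i θ, Finset.mul_sum]
    rw [hr, hGn]
    simp only [dotProduct]
    refine Finset.sum_congr rfl fun j _ => ?_
    calc θ j * ((n:ℝ)⁻¹ * ∑ i, ∫ ω, X i ω j * Y i ω ∂μ)
        = ((n:ℝ)⁻¹ * θ j) * ∑ i, ∫ ω, X i ω j * Y i ω ∂μ := by ring
      _ = ∑ i, (n:ℝ)⁻¹ * (θ j * ∫ ω, X i ω j * Y i ω ∂μ) := by
          rw [Finset.mul_sum]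
          exact Finset.sum_congr rfl fun i _ => by ring
  -- nonnegativity of the quadratic form
  have hquad0 : ∀ θ : Fin p → ℝ, 0 ≤ θ ⬝ᵥ Sn.mulVec θ := by
    intro θ
    rw [hquad θ]
    exact mul_nonneg hninv.le
      (Finset.sum_nonneg fun i _ => integral_nonneg fun ω => sq_nonneg _)
  -- the basic inequality:  2 θᵀΓ ≤ n⁻¹ V + θᵀΣθ
  have hbasic : ∀ θ : Fin p → ℝ, 2 * (θ ⬝ᵥ Gn) ≤ (n:ℝ)⁻¹ * V + θ ⬝ᵥ Sn.mulVec θ := by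
    intro θ
    have hi : ∀ i : Fin n, 2 * ∫ ω, (∑ j, θ j * X i ω j) * Y i ω ∂μ
        ≤ (∫ ω, (Y i ω) ^ 2 ∂μ) + ∫ ω, (∑ j, θ j * X i ω j) ^ 2 ∂μ := by
      intro i
      have h0 : 0 ≤ ∫ ω, (Y i ω - ∑ j, θ j * X i ω j) ^ 2 ∂μ :=
        integral_nonneg fun ω => sq_nonneg _
      have he : (fun ω => (Y i ω - ∑ j, θ j * X i ω j) ^ 2)
          = fun ω => ((Y i ω) ^ 2 + (∑ j, θ j * X i ω j) ^ 2)
              - 2 * ((∑ j, θ j * X i ω j) * Y i ω) := by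
        funext ω; ring
      have hfint : Integrable (fun ω => (Y i ω) ^ 2 + (∑ j, θ j * X i ω j) ^ 2) μ :=
        (hYY i).add (hintZ2 i θ)
      have hgint : Integrable (fun ω => 2 * ((∑ j, θ j * X i ω j) * Y i ω)) μ :=
        (hintZY i θ).const_mul 2
      rw [he, integral_sub hfint hgint, integral_add (hYY i) (hintZ2 i θ),
        integral_const_mul] at h0
      linarith
    have hsum : 2 * (∑ i, ∫ ω, (∑ j, θ j * X i ω j) * Y i ω ∂μ)
        ≤ V + ∑ i, ∫ ω, (∑ j, θ j * X i ω j) ^ 2 ∂μ := by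
      rw [Finset.mul_sum]
      calc ∑ i, 2 * ∫ ω, (∑ j, θ j * X i ω j) * Y i ω ∂μ
          ≤ ∑ i, ((∫ ω, (Y i ω) ^ 2 ∂μ) + ∫ ω, (∑ j, θ j * X i ω j) ^ 2 ∂μ) :=
            Finset.sum_le_sum fun i _ => hi i
        _ = V + ∑ i, ∫ ω, (∑ j, θ j * X i ω j) ^ 2 ∂μ := Finset.sum_add_distrib
    rw [hGdot θ, hquad θ]
    calc 2 * ((n:ℝ)⁻¹ * ∑ i, ∫ ω, (∑ j, θ j * X i ω j) * Y i ω ∂μ)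
        = (n:ℝ)⁻¹ * (2 * ∑ i, ∫ ω, (∑ j, θ j * X i ω j) * Y i ω ∂μ) := by ring
      _ ≤ (n:ℝ)⁻¹ * (V + ∑ i, ∫ ω, (∑ j, θ j * X i ω j) ^ 2 ∂μ) :=
          mul_le_mul_of_nonneg_left hsum hninv.le
      _ = (n:ℝ)⁻¹ * V + (n:ℝ)⁻¹ * ∑ i, ∫ ω, (∑ j, θ j * X i ω j) ^ 2 ∂μ := by ring
  -- lower bound via the sparse eigenvalue
  have hLB : ∀ θ : Fin p → ℝ, θ ≠ 0 → sparse k θ →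
      Lam k Sn * (norm2 θ) ^ 2 ≤ θ ⬝ᵥ Sn.mulVec θ := by
    intro θ h0 hs
    have hbdd : BddBelow {r | ∃ θ' : Fin p → ℝ, θ' ≠ 0 ∧ sparse k θ' ∧
        r = θ' ⬝ᵥ Sn.mulVec θ' / norm2 θ' ^ 2} := by
      refine ⟨0, fun r hr => ?_⟩
      obtain ⟨θ', _, _, rfl⟩ := hr
      exact div_nonneg (hquad0 θ') (sq_nonneg _)
    have hle : Lam k Sn ≤ θ ⬝ᵥ Sn.mulVec θ / norm2 θ ^ 2 :=
      csInf_le hbdd ⟨θ, h0, hs, rfl⟩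
    have hpos : 0 < norm2 θ ^ 2 := pow_pos (norm2_pos h0) 2
    calc Lam k Sn * norm2 θ ^ 2
        ≤ (θ ⬝ᵥ Sn.mulVec θ / norm2 θ ^ 2) * norm2 θ ^ 2 :=
          mul_le_mul_of_nonneg_right hle hpos.le
      _ = θ ⬝ᵥ Sn.mulVec θ := div_mul_cancel₀ _ hpos.ne'
  -- symmetry of Sn
  have hsym : ∀ a b : Fin p, Sn a b = Sn b a := by
    intro a b
    rw [hSn]
    simp only [Matrix.of_apply]
    congr 1
    refine Finset.sum_congr rfl fun i _ => ?_
    exact integral_congr_ae (ae_of_all _ fun ω => mul_comm _ _)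
  -- positive definiteness of the model submatrices
  have hPD : ∀ M : Finset (Fin p), M.card ≤ k → (subm Sn M).PosDef := by
    intro M hMk
    refine Matrix.PosDef.of_dotProduct_mulVec_pos ?_ ?_
    · ext i j
      simp only [Matrix.conjTranspose_apply, subm, star_trivial]
      exact hsym j.1 i.1
    · intro x hx
      have hstar : star x = x := funext fun i => star_trivial _
      have hne : extv M x ≠ 0 := extv_ne_zero M x hx
      rw [hstar, ← extv_dot_mulVec]
      exact lt_of_lt_of_le (mul_pos hLam (pow_pos (norm2_pos hne) 2))
        (hLB _ hne (extv_sparse k M x hMk))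
  -- the main per-model bound
  have hmain2 : ∀ M : Finset (Fin p), M.card ≤ k →
      (norm2 (betaM M Sn Gn)) ^ 2 ≤ ((n:ℝ) * Lam k Sn)⁻¹ * V := by
    intro M hMk
    have hRHS0 : 0 ≤ ((n:ℝ) * Lam k Sn)⁻¹ * V :=
      mul_nonneg (inv_nonneg.2 (mul_nonneg hn'.le hLam.le)) hV0
    by_cases hb0 : betaM M Sn Gn = 0
    · rw [hb0]
      have hz : norm2 (0 : {x // x ∈ M} → ℝ) = 0 := by
        simp [norm2]
      rw [hz]
      simpa using hRHS0
    · set b := betaM M Sn Gn with hbdef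
      set θ := extv M b with hθdef
      have hbne : θ ≠ 0 := extv_ne_zero M b hb0
      have hAdet : IsUnit (subm Sn M).det := ((hPD M hMk).det_pos).ne'.isUnit
      have hnormal : (subm Sn M).mulVec b = subv Gn M := by
        show (subm Sn M).mulVec ((subm Sn M)⁻¹.mulVec (subv Gn M)) = subv Gn M
        rw [Matrix.mulVec_mulVec, Matrix.mul_nonsing_inv _ hAdet, Matrix.one_mulVec]
      have hQP : θ ⬝ᵥ Sn.mulVec θ = θ ⬝ᵥ Gn := by
        rw [hθdef, extv_dot_mulVec, extv_dot_vec, ← hnormal]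
      have h1 : θ ⬝ᵥ Sn.mulVec θ ≤ (n:ℝ)⁻¹ * V := by
        have hb := hbasic θ
        rw [hQP] at hb ⊢
        linarith
      have h2 := hLB θ hbne (extv_sparse k M b hMk)
      have hn2 : norm2 b = norm2 θ := (extv_norm2 M b).symm
      rw [hn2]
      have hΛ' : Lam k Sn * norm2 θ ^ 2 ≤ (n:ℝ)⁻¹ * V := le_trans h2 h1
      rw [show ((n:ℝ) * Lam k Sn)⁻¹ * V = ((n:ℝ)⁻¹ * V) / Lam k Sn by
        rw [mul_inv]; ring]
      exact (le_div_iff₀ hLam).2 (by rw [mul_comm]; exact hΛ')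
  constructor
  · -- the ℓ₂ bound
    unfold S2k
    rcases isEmpty_or_nonempty (Models p k) with h | h
    · haveI := h
      rw [Real.iSup_of_isEmpty]
      exact Real.sqrt_nonneg _
    · refine ciSup_le fun M => ?_
      calc norm2 (betaM M.1 Sn Gn)
          = Real.sqrt ((norm2 (betaM M.1 Sn Gn)) ^ 2) :=
            (Real.sqrt_sq (norm2_nonneg _)).symm
        _ ≤ Real.sqrt (((n:ℝ) * Lam k Sn)⁻¹ * V) :=
            Real.sqrt_le_sqrt (hmain2 M.1 M.2.2)
  · -- the ℓ₁ bound
    unfold S1k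
    rcases isEmpty_or_nonempty (Models p k) with h | h
    · haveI := h
      rw [Real.iSup_of_isEmpty]
      exact Real.sqrt_nonneg _
    · refine ciSup_le fun M => ?_
      set b := betaM M.1 Sn Gn with hbdef
      have hcs : (norm1 b) ^ 2 ≤ (M.1.card : ℝ) * (norm2 b) ^ 2 := by
        have h1 : (∑ i, |b i|) ^ 2
            ≤ (((Finset.univ : Finset {x // x ∈ M.1}).card : ℝ)) * ∑ i, |b i| ^ 2 :=
          sq_sum_le_card_mul_sum_sq
        rw [Finset.card_univ, Fintype.card_coe] at h1
        have h2 : ∑ i, |b i| ^ 2 = ∑ i, (b i) ^ 2 :=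
          Finset.sum_congr rfl fun i _ => sq_abs _
        unfold norm1
        rw [norm2_sq, ← h2]
        exact h1
      have hb2 := hmain2 M.1 M.2.2
      have hcard : (M.1.card : ℝ) ≤ (k : ℝ) := Nat.cast_le.2 M.2.2
      have hfinal : (norm1 b) ^ 2 ≤ (k : ℝ) * (((n:ℝ) * Lam k Sn)⁻¹ * V) :=
        le_trans hcs (mul_le_mul hcard hb2 (sq_nonneg _) (Nat.cast_nonneg k))
      have hnn1 : 0 ≤ norm1 b := by
        unfold norm1
        exact Finset.sum_nonneg fun i _ => abs_nonneg _
      calc norm1 b = Real.sqrt ((norm1 b) ^ 2) := (Real.sqrt_sq hnn1).symm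
        _ ≤ Real.sqrt ((k:ℝ) * ((n:ℝ) * Lam k Sn)⁻¹ * V) :=
            Real.sqrt_le_sqrt (by rw [mul_assoc]; exact hfinal)
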